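/- Let n, N ≥ 1, s ∈ (−1, ∞), and set μ(s) := 1 − (s/(2+s))². Let u : ℝⁿ → ℝᴺ be differentiable at a point x with u(x) ≠ 0, and set v := u |u|^s (so v is differentiable at x). Then, with ⟨Du, Dv⟩ := Σ_{i=1}^n Σ_{α=1}^N ∂_i u^α(x) ∂_i v^α(x) the Frobenius inner product of the Jacobians and |·| the Frobenius norm, one has ⟨Du(x), Dv(x)⟩ ≥ μ(s)^{1/2} |Du(x)| |Dv(x)|. -/

import Mathlib

open Set
open scoped Topology

/-- The Frobenius inner product of the Jacobians (as `n × N` matrices) of two linear maps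
between Euclidean spaces. -/
noncomputable def frob {n N : ℕ}
    (L M : EuclideanSpace ℝ (Fin n) →L[ℝ] EuclideanSpace ℝ (Fin N)) : ℝ :=
  ∑ i : Fin n, ∑ α : Fin N,
    L (EuclideanSpace.single i 1) α * M (EuclideanSpace.single i 1) α

/-- The Frobenius norm of a linear map between Euclidean spaces. -/
noncomputable def frobNorm {n N : ℕ}
    (L : EuclideanSpace ℝ (Fin n) →L[ℝ] EuclideanSpace ℝ (Fin N)) : ℝ :=
  Real.sqrt (frob L L)

private lemma kalita_key_aux (s S P : ℝ) (hs : -1 < s) :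
    (1 - (s / (2 + s)) ^ 2) * (P * (P + (2*s + s^2) * S)) ≤ (P + s * S)^2 := by
  have h2s : (0:ℝ) < 2 + s := by linarith
  have hμeq : 1 - (s / (2 + s)) ^ 2 = 4 * (1 + s) / (2 + s)^2 := by
    field_simp
    ring
  rw [hμeq, div_mul_eq_mul_div, div_le_iff₀ (by positivity)]
  nlinarith [sq_nonneg (s * ((2 + s) * S - P))]

private lemma kalita_nonneg_aux (c S b : ℝ) (hc : -1 ≤ c) (hS : 0 ≤ S) (hb : 0 ≤ b) :
    0 ≤ S + b + c * S := by nlinarith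

open RealInnerProductSpace in
/-- Kalita's algebraic lemma: for `v = u |u|^s` one has
`⟨Du, Dv⟩ ≥ μ(s)^{1/2} |Du| |Dv|` with `μ(s) = 1 - (s/(2+s))²`, at any point of
differentiability of `u` where `u ≠ 0`. -/
theorem kalita_inner_product_inequality {n N : ℕ} (hn : 1 ≤ n) (hN : 1 ≤ N)
    (s : ℝ) (hs : -1 < s)
    (u : EuclideanSpace ℝ (Fin n) → EuclideanSpace ℝ (Fin N))
    (x : EuclideanSpace ℝ (Fin n))
    (hu : DifferentiableAt ℝ u x) (hux : u x ≠ 0)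
    (v : EuclideanSpace ℝ (Fin n) → EuclideanSpace ℝ (Fin N))
    (hv : v = fun y => ‖u y‖ ^ s • u y) :
    DifferentiableAt ℝ v x ∧
    Real.sqrt (1 - (s / (2 + s)) ^ 2) * (frobNorm (fderiv ℝ u x) * frobNorm (fderiv ℝ v x))
      ≤ frob (fderiv ℝ u x) (fderiv ℝ v x) := by
  classical
  have hu' := hu.hasFDerivAt
  set w : EuclideanSpace ℝ (Fin N) := u x with hw
  set A : EuclideanSpace ℝ (Fin n) →L[ℝ] EuclideanSpace ℝ (Fin N) := fderiv ℝ u x with hA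
  have hwpos : (0:ℝ) < ‖w‖ := norm_pos_iff.mpr hux
  have hgxpos : (0:ℝ) < ⟪w, w⟫ := by
    rw [real_inner_self_eq_norm_sq]; positivity
  set gx : ℝ := ⟪w, w⟫ with hgx
  -- rewrite v in terms of the inner product
  have hveq : v = fun y => (⟪u y, u y⟫) ^ (s/2) • u y := by
    funext y
    rw [hv]
    congr 1
    rw [real_inner_self_eq_norm_sq, ← Real.rpow_natCast ‖u y‖ 2,
      ← Real.rpow_mul (norm_nonneg _)]
    congr 1
    push_cast
    ring
  -- the derivative of v
  set G : EuclideanSpace ℝ (Fin n) →L[ℝ] ℝ :=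
    (fderivInnerCLM ℝ (w, w)).comp (A.prod A) with hG
  have hinner : HasFDerivAt (fun y => ⟪u y, u y⟫) G x := hu'.inner ℝ hu'
  have hpow : HasFDerivAt (fun y => (⟪u y, u y⟫) ^ (s/2))
      ((s/2 * gx ^ (s/2 - 1)) • G) x := hinner.rpow_const (Or.inl (ne_of_gt hgxpos))
  set D : EuclideanSpace ℝ (Fin n) →L[ℝ] EuclideanSpace ℝ (Fin N) :=
    gx ^ (s/2) • A + ((s/2 * gx ^ (s/2 - 1)) • G).smulRight w with hDdef
  have hV : HasFDerivAt v D x := by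
    rw [hveq]
    exact hpow.smul hu'
  refine ⟨hV.differentiableAt, ?_⟩
  have hfd : fderiv ℝ v x = D := hV.fderiv
  rw [hfd]
  -- abbreviations
  set e : Fin n → EuclideanSpace ℝ (Fin n) := fun i => EuclideanSpace.single i 1 with he
  set τ : ℝ := gx ^ (s/2 - 1) with hτ
  have hτpos : 0 < τ := Real.rpow_pos_of_pos hgxpos _
  have htτ : gx ^ (s/2) = τ * gx := by
    have h1 : τ * gx = gx ^ (s/2 - 1) * gx ^ (1:ℝ) := by rw [Real.rpow_one, hτ]
    rw [h1, ← Real.rpow_add hgxpos]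
    norm_num
  -- inner products as sums
  have hsum : ∀ z z' : EuclideanSpace ℝ (Fin N), ⟪z, z'⟫ = ∑ α, z α * z' α := by
    intro z z'
    simp [PiLp.inner_apply, RCLike.inner_apply, conj_trivial]
    exact Finset.sum_congr rfl fun α _ => mul_comm _ _
  set q : Fin n → ℝ := fun i => ⟪w, A (e i)⟫ with hq
  -- pointwise formula for D
  have happ : ∀ (i : Fin n) (α : Fin N),
      D (e i) α = τ * gx * A (e i) α + s * τ * q i * w α := by
    intro i α
    have h1 : D (e i) = gx ^ (s/2) • A (e i) + ((s/2 * τ) * G (e i)) • w := by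
      simp [hDdef, ContinuousLinearMap.add_apply, ContinuousLinearMap.smul_apply,
        ContinuousLinearMap.smulRight_apply]
    have h2 : G (e i) = ⟪w, A (e i)⟫ + ⟪A (e i), w⟫ := by
      simp [hG, fderivInnerCLM_apply]
    have h3 : ⟪A (e i), w⟫ = q i := real_inner_comm _ _
    rw [h1, h2, h3]
    have h4 : ⟪w, A (e i)⟫ = q i := rfl
    rw [h4, htτ]
    simp only [PiLp.add_apply, PiLp.smul_apply, smul_eq_mul]
    ring
  set F : ℝ := frob A A with hF
  set S : ℝ := ∑ i, q i * q i with hS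
  have hqsum : ∀ i, q i = ∑ α, w α * A (e i) α := fun i => hsum _ _
  have hqsum' : ∀ i, (∑ α, A (e i) α * w α) = q i := by
    intro i
    rw [hqsum i]
    exact Finset.sum_congr rfl fun α _ => mul_comm _ _
  have hgxsum : gx = ∑ α, w α * w α := hsum w w
  have hFsum : F = ∑ i, ∑ α, A (e i) α * A (e i) α := rfl
  have hADsum : frob A D = ∑ i, ∑ α, A (e i) α * D (e i) α := rfl
  have hDDsum : frob D D = ∑ i, ∑ α, D (e i) α * D (e i) α := rfl
  -- frob A D
  have hfrobAD : frob A D = τ * (gx * F + s * S) := by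
    have hrow : ∀ i, (∑ α, A (e i) α * D (e i) α)
        = τ * gx * (∑ α, A (e i) α * A (e i) α) + s * τ * (q i * q i) := by
      intro i
      calc (∑ α, A (e i) α * D (e i) α)
          = ∑ α, (τ * gx * (A (e i) α * A (e i) α)
              + s * τ * q i * (A (e i) α * w α)) := by
            refine Finset.sum_congr rfl fun α _ => ?_
            rw [happ i α]; ring
        _ = τ * gx * (∑ α, A (e i) α * A (e i) α)
              + s * τ * q i * (∑ α, A (e i) α * w α) := by
            rw [Finset.sum_add_distrib, ← Finset.mul_sum, ← Finset.mul_sum]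
        _ = _ := by rw [hqsum' i]; ring
    calc frob A D = ∑ i, ∑ α, A (e i) α * D (e i) α := hADsum
      _ = ∑ i, (τ * gx * (∑ α, A (e i) α * A (e i) α) + s * τ * (q i * q i)) :=
          Finset.sum_congr rfl fun i _ => hrow i
      _ = τ * gx * (∑ i, ∑ α, A (e i) α * A (e i) α) + s * τ * S := by
          rw [Finset.sum_add_distrib, ← Finset.mul_sum, ← Finset.mul_sum, hS]
      _ = τ * (gx * F + s * S) := by rw [← hFsum]; ring
  -- frob D D
  have hfrobDD : frob D D = τ^2 * gx * (gx * F + (2*s + s^2) * S) := by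
    have hrow : ∀ i, (∑ α, D (e i) α * D (e i) α)
        = τ^2 * gx^2 * (∑ α, A (e i) α * A (e i) α)
          + (2 * s * τ^2 * gx + s^2 * τ^2 * gx) * (q i * q i) := by
      intro i
      calc (∑ α, D (e i) α * D (e i) α)
          = ∑ α, (τ^2 * gx^2 * (A (e i) α * A (e i) α)
              + 2 * (τ * gx * (s * τ * q i)) * (A (e i) α * w α)
              + (s * τ * q i)^2 * (w α * w α)) := by
            refine Finset.sum_congr rfl fun α _ => ?_
            rw [happ i α]; ring
        _ = (∑ α, (τ^2 * gx^2 * (A (e i) α * A (e i) α)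
              + 2 * (τ * gx * (s * τ * q i)) * (A (e i) α * w α)))
              + (s * τ * q i)^2 * (∑ α, w α * w α) := by
            rw [Finset.sum_add_distrib, ← Finset.mul_sum]
        _ = τ^2 * gx^2 * (∑ α, A (e i) α * A (e i) α)
              + 2 * (τ * gx * (s * τ * q i)) * (∑ α, A (e i) α * w α)
              + (s * τ * q i)^2 * (∑ α, w α * w α) := by
            rw [Finset.sum_add_distrib, ← Finset.mul_sum, ← Finset.mul_sum]
        _ = _ := by rw [hqsum' i, ← hgxsum]; ring
    calc frob D D = ∑ i, ∑ α, D (e i) α * D (e i) α := hDDsum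
      _ = ∑ i, (τ^2 * gx^2 * (∑ α, A (e i) α * A (e i) α)
            + (2 * s * τ^2 * gx + s^2 * τ^2 * gx) * (q i * q i)) :=
          Finset.sum_congr rfl fun i _ => hrow i
      _ = τ^2 * gx^2 * (∑ i, ∑ α, A (e i) α * A (e i) α)
            + (2 * s * τ^2 * gx + s^2 * τ^2 * gx) * S := by
          rw [Finset.sum_add_distrib, ← Finset.mul_sum, ← Finset.mul_sum, hS]
      _ = _ := by rw [← hFsum]; ring
  -- nonnegativity and Cauchy-Schwarz
  have hSnonneg : 0 ≤ S := Finset.sum_nonneg fun i _ => mul_self_nonneg _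
  have hFnonneg : 0 ≤ F := by
    rw [hFsum]
    exact Finset.sum_nonneg fun i _ => Finset.sum_nonneg fun α _ => mul_self_nonneg _
  have hCS : S ≤ gx * F := by
    have hterm : ∀ i : Fin n, q i * q i ≤ gx * (∑ α, A (e i) α * A (e i) α) := by
      intro i
      have hcs := Finset.sum_mul_sq_le_sq_mul_sq Finset.univ (fun α => w α)
        (fun α => A (e i) α)
      calc q i * q i = (∑ α, w α * A (e i) α)^2 := by rw [hqsum i]; ring
        _ ≤ (∑ α, (w α)^2) * (∑ α, (A (e i) α)^2) := hcs
        _ = gx * (∑ α, A (e i) α * A (e i) α) := by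
            rw [hgxsum]
            congr 1 <;> exact Finset.sum_congr rfl fun α _ => (sq _)
    calc S ≤ ∑ i, gx * (∑ α, A (e i) α * A (e i) α) :=
          Finset.sum_le_sum fun i _ => hterm i
      _ = gx * F := by rw [← Finset.mul_sum, ← hFsum]
  -- the scalar inequality
  clear_value D G q S F τ e gx A w
  clear hu hv hveq hu' hV hfd hDdef hG hinner hpow happ hsum hqsum hqsum' hgxsum hq hw hA hτ
    hS hADsum hDDsum hgx hwpos hux u v x
  have h2s : (0:ℝ) < 2 + s := by linarith
  have hb : 0 ≤ gx * F - S := by linarith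
  have hμeq : 1 - (s / (2 + s)) ^ 2 = 4 * (1 + s) / (2 + s)^2 := by
    field_simp
    ring
  have hμnonneg : 0 ≤ 1 - (s / (2 + s)) ^ 2 := by
    rw [hμeq]
    have : (0:ℝ) < 1 + s := by linarith
    positivity
  have key : (1 - (s / (2 + s)) ^ 2) * ((gx * F) * (gx * F + (2*s + s^2) * S))
      ≤ (gx * F + s * S)^2 := kalita_key_aux s S (gx * F) hs
  have hADnonneg : 0 ≤ frob A D := by
    rw [hfrobAD]
    have h1 : 0 ≤ gx * F + s * S := by
      have := kalita_nonneg_aux s S (gx * F - S) hs.le hSnonneg hb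
      linarith
    exact mul_nonneg hτpos.le h1
  have hmain : (1 - (s / (2 + s)) ^ 2) * (F * frob D D) ≤ (frob A D)^2 := by
    rw [hfrobDD, hfrobAD]
    calc (1 - (s / (2 + s)) ^ 2) * (F * (τ^2 * gx * (gx * F + (2*s + s^2) * S)))
        = (1 - (s / (2 + s)) ^ 2) * ((gx * F) * (gx * F + (2*s + s^2) * S)) * τ^2 := by
          ring
      _ ≤ (gx * F + s * S)^2 * τ^2 := mul_le_mul_of_nonneg_right key (sq_nonneg τ)
      _ = (τ * (gx * F + s * S))^2 := by ring
  have hDDnonneg : 0 ≤ frob D D := by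
    rw [hfrobDD]
    have h1 : 0 ≤ gx * F + (2*s + s^2) * S := by
      have := kalita_nonneg_aux (2*s + s^2) S (gx * F - S)
        (by nlinarith [sq_nonneg (1 + s)]) hSnonneg hb
      linarith
    exact mul_nonneg (mul_nonneg (sq_nonneg τ) hgxpos.le) h1
  calc Real.sqrt (1 - (s / (2 + s)) ^ 2) * (frobNorm A * frobNorm D)
      = Real.sqrt ((1 - (s / (2 + s)) ^ 2) * (F * frob D D)) := by
        unfold frobNorm
        rw [Real.sqrt_mul hμnonneg, Real.sqrt_mul hFnonneg, ← hF]
    _ ≤ Real.sqrt ((frob A D)^2) := Real.sqrt_le_sqrt hmain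
    _ = frob A D := Real.sqrt_sq hADnonneg
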